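/- Let R be a commutative ring of characteristic 2 with divided power operations γ_k on an ideal I satisfying γ_k(ax+by) = Σ_{r+s=k} γ_r(ax)γ_s(by), γ_k(ax) = a^k γ_k(x), and γ_2(uv) = 0 for u,v ∈ I. Then for a, b ∈ R and x, y ∈ I: γ_2^r(ax + by) ≡ a^{2^r} γ_2^r(x) + b^{2^r} γ_2^r(y) modulo the ideal generated by products of two elements of I, for all r ≥ 1. -/

import Mathlib

lemma dpow_two_add {R : Type*} [CommRing R] {I : Ideal R} (hI : DividedPowers I)
    {u v : R} (hu : u ∈ I) (hv : v ∈ I) :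
    hI.dpow 2 (u + v) = hI.dpow 2 u + u * v + hI.dpow 2 v := by
  rw [hI.dpow_add (n := 2) hu hv, Finset.Nat.sum_antidiagonal_eq_sum_range_succ_mk]
  simp [Finset.sum_range_succ, hI.dpow_zero hu, hI.dpow_zero hv, hI.dpow_one hu, hI.dpow_one hv]
  ring

lemma dpow_two_sq_mem {R : Type*} [CommRing R] {I : Ideal R} (hI : DividedPowers I)
    (hmul : ∀ u ∈ I, ∀ v ∈ I, hI.dpow 2 (u * v) = 0)
    {e : R} (he : e ∈ I * I) : hI.dpow 2 e ∈ I * I := by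
  suffices h : e ∈ I ∧ hI.dpow 2 e ∈ I * I from h.2
  refine Submodule.mul_induction_on he (fun m hm n hn => ?_) (fun p q hp hq => ?_)
  · exact ⟨I.mul_mem_left m hn, by rw [hmul m hm n hn]; exact zero_mem _⟩
  · refine ⟨I.add_mem hp.1 hq.1, ?_⟩
    rw [dpow_two_add hI hp.1 hq.1]
    exact add_mem (add_mem hp.2 (Ideal.mul_mem_mul hp.1 hq.1)) hq.2

/-- In a commutative ring of characteristic 2 with divided powers on an
ideal `I` whose divided square kills products of elements of `I`, for `a b : R` and
`x y ∈ I` the `r`-fold iterated divided square satisfies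
`γ₂^r(ax + by) ≡ a^(2^r)·γ₂^r(x) + b^(2^r)·γ₂^r(y)` modulo the ideal `I·I`
generated by products of two elements of `I`, for all `r ≥ 1`. -/
theorem stmt_5 {R : Type*} [CommRing R] [CharP R 2] {I : Ideal R}
    (hI : DividedPowers I)
    (hmul : ∀ u ∈ I, ∀ v ∈ I, hI.dpow 2 (u * v) = 0)
    (a b x y : R) (hx : x ∈ I) (hy : y ∈ I) :
    ∀ r : ℕ, 1 ≤ r →
      (fun w => hI.dpow 2 w)^[r] (a * x + b * y)
        - (a ^ (2 ^ r) * (fun w => hI.dpow 2 w)^[r] x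
            + b ^ (2 ^ r) * (fun w => hI.dpow 2 w)^[r] y) ∈ I * I := by
  set F : R → R := fun w => hI.dpow 2 w with hF
  have hiter : ∀ (z : R), z ∈ I → ∀ r : ℕ, F^[r] z ∈ I := by
    intro z hz r
    induction r with
    | zero => simpa using hz
    | succ n ih => rw [Function.iterate_succ_apply']; exact hI.dpow_mem two_ne_zero ih
  intro r hr
  induction r, hr using Nat.le_induction with
  | base =>
      simp only [Function.iterate_one, pow_one, hF]
      have hax : a * x ∈ I := I.mul_mem_left a hx
      have hby : b * y ∈ I := I.mul_mem_left b hy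
      rw [dpow_two_add hI hax hby, hI.dpow_mul (n := 2) hx, hI.dpow_mul (n := 2) hy]
      have : a ^ 2 * hI.dpow 2 x + a * x * (b * y) + b ^ 2 * hI.dpow 2 y -
          (a ^ 2 * hI.dpow 2 x + b ^ 2 * hI.dpow 2 y) = a * x * (b * y) := by ring
      rw [this]
      exact Ideal.mul_mem_mul hax hby
  | succ n hn ih =>
      set X := F^[n] x with hX
      set Y := F^[n] y with hY
      set P := F^[n] (a * x + b * y) with hP
      set e := P - (a ^ 2 ^ n * X + b ^ 2 ^ n * Y) with he
      have heI : e ∈ I * I := ih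
      have heI' : e ∈ I := Ideal.mul_le_right heI
      have hXI : X ∈ I := hiter x hx n
      have hYI : Y ∈ I := hiter y hy n
      have hA : a ^ 2 ^ n * X ∈ I := I.mul_mem_left _ hXI
      have hB : b ^ 2 ^ n * Y ∈ I := I.mul_mem_left _ hYI
      have hPeq : P = a ^ 2 ^ n * X + (b ^ 2 ^ n * Y + e) := by rw [he]; ring
      rw [Function.iterate_succ_apply', Function.iterate_succ_apply',
        Function.iterate_succ_apply', ← hX, ← hY, ← hP]
      show F P - (a ^ 2 ^ (n + 1) * F X + b ^ 2 ^ (n + 1) * F Y) ∈ I * I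
      have expand : F P = a ^ 2 ^ n * X * (b ^ 2 ^ n * Y + e) + (b ^ 2 ^ n * Y) * e
          + F e + (a ^ 2 ^ (n + 1) * F X + b ^ 2 ^ (n + 1) * F Y) := by
        show hI.dpow 2 P = _
        rw [hPeq, dpow_two_add hI hA (I.add_mem hB heI'),
          dpow_two_add hI hB heI', hI.dpow_mul (n := 2) hXI, hI.dpow_mul (n := 2) hYI]
        have h2 : ∀ c : R, (c ^ 2 ^ n) ^ 2 = c ^ 2 ^ (n + 1) := by
          intro c; rw [← pow_mul, pow_succ]
        rw [h2, h2]
        show _ = _ + _ + hI.dpow 2 e + (a ^ 2 ^ (n+1) * hI.dpow 2 X + b ^ 2 ^ (n+1) * hI.dpow 2 Y)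
        ring
      rw [expand]
      have : a ^ 2 ^ n * X * (b ^ 2 ^ n * Y + e) + b ^ 2 ^ n * Y * e + F e
          + (a ^ 2 ^ (n + 1) * F X + b ^ 2 ^ (n + 1) * F Y)
          - (a ^ 2 ^ (n + 1) * F X + b ^ 2 ^ (n + 1) * F Y)
          = a ^ 2 ^ n * X * (b ^ 2 ^ n * Y + e) + b ^ 2 ^ n * Y * e + F e := by ring
      rw [this]
      refine add_mem (add_mem ?_ ?_) ?_
      · exact Ideal.mul_mem_mul hA (I.add_mem hB heI')
      · exact Ideal.mul_mem_left _ _ heI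
      · exact dpow_two_sq_mem hI hmul heI
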